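/- arXiv:2401.16826 — 4 statements merged into one kernel-verified Lean document; each statement's English description precedes it below -/
import Mathlib

section
/- For fixed positive powers P₁, P₂, positive σ², correlation 0 < ρ < 1, and channel vectors h₁, h₂ with h₁^H h₂ ≠ 0, the phase difference φ_d = arg(h₁^H h₂)/π (i.e., the φ_d maximizing Re(e^{-iπφ_d} h₁^H h₂)) minimizes the two-user sum-MSE ξ(φ_d) = σ²(2σ² + (1-ρ²)(P₁‖h₁‖² + P₂‖h₂‖²)) / (σ⁴ + σ² υ(φ_d) + ω) over all real φ_d, where υ(φ_d) = P₁‖h₁‖² + P₂‖h₂‖² + 2ρ√(P₁P₂) Re(e^{-iπφ_d} h₁^H h₂) and ω = P₁P₂(1-ρ²)(‖h₁‖²‖h₂‖² - |h₁^H h₂|²). -/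
set_option maxHeartbeats 1000000

lemma cs_aux {NR : ℕ} (h₁ h₂ : Fin NR → ℂ) :
    ‖∑ i, (starRingEnd ℂ) (h₁ i) * h₂ i‖ ^ 2 ≤
      (∑ i, Complex.normSq (h₁ i)) * (∑ i, Complex.normSq (h₂ i)) := by
  set x := (WithLp.equiv 2 (Fin NR → ℂ)).symm h₁ with hxdef
  set y := (WithLp.equiv 2 (Fin NR → ℂ)).symm h₂ with hydef
  have hx : ∀ i, x i = h₁ i := fun i => rfl
  have hy : ∀ i, y i = h₂ i := fun i => rfl
  have H := norm_inner_le_norm (𝕜 := ℂ) x y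
  rw [PiLp.inner_apply] at H
  simp only [RCLike.inner_apply, hx, hy] at H
  have h1 : ‖x‖ ^ 2 = ∑ i, Complex.normSq (h₁ i) := by
    rw [EuclideanSpace.norm_eq, Real.sq_sqrt (by positivity)]
    simp only [hx, Complex.sq_norm]
  have h2 : ‖y‖ ^ 2 = ∑ i, Complex.normSq (h₂ i) := by
    rw [EuclideanSpace.norm_eq, Real.sq_sqrt (by positivity)]
    simp only [hy, Complex.sq_norm]
  calc ‖∑ i, (starRingEnd ℂ) (h₁ i) * h₂ i‖ ^ 2
      ≤ (‖x‖ * ‖y‖)^2 := by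
        rw [show (∑ i, (starRingEnd ℂ) (h₁ i) * h₂ i) = ∑ i, h₂ i * (starRingEnd ℂ) (h₁ i) from Finset.sum_congr rfl fun i _ => mul_comm _ _]
        exact pow_le_pow_left₀ (norm_nonneg _) H 2
    _ = _ := by rw [mul_pow, h1, h2]

theorem stmt_2 {NR : ℕ} (h₁ h₂ : Fin NR → ℂ) (ρ σ2 P₁ P₂ : ℝ)
    (hρ : 0 < ρ) (hρ1 : ρ < 1) (hσ : 0 < σ2) (hP₁ : 0 < P₁) (hP₂ : 0 < P₂)
    (ip : ℂ) (hip : ip = ∑ i, (starRingEnd ℂ) (h₁ i) * h₂ i) (hne : ip ≠ 0) :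
    let n₁ : ℝ := ∑ i, Complex.normSq (h₁ i)
    let n₂ : ℝ := ∑ i, Complex.normSq (h₂ i)
    let υ : ℝ → ℝ := fun φd => P₁ * n₁ + P₂ * n₂ +
      2 * ρ * Real.sqrt (P₁ * P₂) *
        (Complex.exp (-(Real.pi * φd : ℝ) * Complex.I) * ip).re
    let ω : ℝ := P₁ * P₂ * (1 - ρ ^ 2) * (n₁ * n₂ - ‖ip‖ ^ 2)
    let ξ : ℝ → ℝ := fun φd =>
      σ2 * (2 * σ2 + (1 - ρ ^ 2) * (P₁ * n₁ + P₂ * n₂)) /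
        (σ2 ^ 2 + σ2 * υ φd + ω)
    ∀ φd : ℝ, ξ (Complex.arg ip / Real.pi) ≤ ξ φd := by
  intro n₁ n₂ υ ω ξ φd
  have hn₁ : 0 ≤ n₁ := Finset.sum_nonneg fun i _ => Complex.normSq_nonneg _
  have hn₂ : 0 ≤ n₂ := Finset.sum_nonneg fun i _ => Complex.normSq_nonneg _
  have hcs : ‖ip‖ ^ 2 ≤ n₁ * n₂ := by rw [hip]; exact cs_aux h₁ h₂
  clear_value n₁ n₂
  have hs : 0 ≤ Real.sqrt (P₁ * P₂) := Real.sqrt_nonneg _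
  have hs2 : Real.sqrt (P₁ * P₂) ^ 2 = P₁ * P₂ := Real.sq_sqrt (by positivity)
  -- the Re term is bounded by |ip|
  have key : ∀ t : ℝ, (Complex.exp (-(t:ℝ) * Complex.I) * ip).re ≤ ‖ip‖ := by
    intro t
    calc (Complex.exp (-(t:ℝ) * Complex.I) * ip).re
        ≤ ‖Complex.exp (-(t:ℝ) * Complex.I) * ip‖ := Complex.re_le_norm _
      _ = ‖ip‖ := by
          rw [norm_mul]
          have : ‖Complex.exp (-(t:ℝ) * Complex.I)‖ = 1 := by
            rw [Complex.norm_exp]; simp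
          rw [this, one_mul]
  have keylo : ∀ t : ℝ, -‖ip‖ ≤ (Complex.exp (-(t:ℝ) * Complex.I) * ip).re := by
    intro t
    have h1 : |((Complex.exp (-(t:ℝ) * Complex.I) * ip).re)| ≤
        ‖Complex.exp (-(t:ℝ) * Complex.I) * ip‖ := Complex.abs_re_le_norm _
    have h2 : ‖Complex.exp (-(t:ℝ) * Complex.I) * ip‖ = ‖ip‖ := by
      rw [norm_mul]
      have : ‖Complex.exp (-(t:ℝ) * Complex.I)‖ = 1 := by
        rw [Complex.norm_exp]; simp
      rw [this, one_mul]
    rw [h2] at h1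
    linarith [neg_abs_le ((Complex.exp (-(t:ℝ) * Complex.I) * ip).re), abs_le.mp h1]
  -- at the optimal phase, the Re term equals |ip|
  have hopt : (Complex.exp (-(Real.pi * (Complex.arg ip / Real.pi) : ℝ) * Complex.I) * ip).re
      = ‖ip‖ := by
    have hπ : (Real.pi : ℝ) ≠ 0 := Real.pi_ne_zero
    have harg : Real.pi * (Complex.arg ip / Real.pi) = Complex.arg ip := by
      field_simp
    rw [harg]
    have habsne : ‖ip‖ ≠ 0 := norm_ne_zero_iff.mpr hne
    have hre : (Complex.exp (-(Complex.arg ip : ℝ) * Complex.I) * ip).re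
        = Real.cos (Complex.arg ip) * ip.re + Real.sin (Complex.arg ip) * ip.im := by
      rw [show ((-(Complex.arg ip : ℝ) : ℂ)) = ((-Complex.arg ip : ℝ) : ℂ) by push_cast; ring]
      rw [Complex.mul_re, Complex.exp_ofReal_mul_I_re, Complex.exp_ofReal_mul_I_im]
      rw [Real.cos_neg, Real.sin_neg]
      ring
    rw [hre, Complex.cos_arg hne, Complex.sin_arg]
    have hsq : ip.re ^ 2 + ip.im ^ 2 = ‖ip‖ ^ 2 := by
      rw [Complex.sq_norm, Complex.normSq_apply]; ring
    field_simp
    nlinarith [hsq]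
  -- bound helper: 2 ρ s |ip| ≤ P₁ n₁ + P₂ n₂
  have habs : 0 ≤ ‖ip‖ := norm_nonneg _
  have hb : 2 * ρ * Real.sqrt (P₁ * P₂) * ‖ip‖ ≤ P₁ * n₁ + P₂ * n₂ := by
    have hA : ‖ip‖ ≤ Real.sqrt (n₁ * n₂) := by
      rw [← Real.sqrt_sq habs]
      exact Real.sqrt_le_sqrt hcs
    have hprod : Real.sqrt (P₁ * P₂) * Real.sqrt (n₁ * n₂)
        = Real.sqrt (P₁ * n₁) * Real.sqrt (P₂ * n₂) := by
      rw [← Real.sqrt_mul (by positivity), ← Real.sqrt_mul (by positivity)]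
      ring_nf
    have h2ab : 2 * (Real.sqrt (P₁ * n₁) * Real.sqrt (P₂ * n₂)) ≤ P₁ * n₁ + P₂ * n₂ := by
      nlinarith [sq_nonneg (Real.sqrt (P₁ * n₁) - Real.sqrt (P₂ * n₂)),
        Real.sq_sqrt (mul_nonneg hP₁.le hn₁), Real.sq_sqrt (mul_nonneg hP₂.le hn₂)]
    have hsA : Real.sqrt (P₁ * P₂) * ‖ip‖ ≤
        Real.sqrt (P₁ * n₁) * Real.sqrt (P₂ * n₂) := by
      rw [← hprod]
      exact mul_le_mul_of_nonneg_left hA hs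
    have hsA0 : 0 ≤ Real.sqrt (P₁ * P₂) * ‖ip‖ := mul_nonneg hs habs
    nlinarith [mul_le_mul_of_nonneg_left hsA (by linarith : (0:ℝ) ≤ 2 * ρ)]
  -- υ is nonnegative everywhere
  have hυ : ∀ t : ℝ, 0 ≤ υ t := by
    intro t
    have := keylo (Real.pi * t)
    have hc : 0 ≤ 2 * ρ * Real.sqrt (P₁ * P₂) := by positivity
    have : 2 * ρ * Real.sqrt (P₁ * P₂) * (-‖ip‖) ≤
        2 * ρ * Real.sqrt (P₁ * P₂) *
          (Complex.exp (-(Real.pi * t : ℝ) * Complex.I) * ip).re :=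
      mul_le_mul_of_nonneg_left this hc
    simp only [υ]
    nlinarith
  have hω : 0 ≤ ω := by
    have h1 : 0 ≤ 1 - ρ ^ 2 := by nlinarith
    have : 0 ≤ n₁ * n₂ - ‖ip‖ ^ 2 := by linarith
    positivity
  -- denominators
  have hDpos : ∀ t : ℝ, 0 < σ2 ^ 2 + σ2 * υ t + ω := by
    intro t
    have := hυ t
    nlinarith
  have hDle : σ2 ^ 2 + σ2 * υ φd + ω ≤
      σ2 ^ 2 + σ2 * υ (Complex.arg ip / Real.pi) + ω := by
    have h1 : υ φd ≤ υ (Complex.arg ip / Real.pi) := by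
      simp only [υ]
      have := key (Real.pi * φd)
      rw [hopt]
      have hc : 0 ≤ 2 * ρ * Real.sqrt (P₁ * P₂) := by positivity
      nlinarith
    nlinarith
  have hN : 0 ≤ σ2 * (2 * σ2 + (1 - ρ ^ 2) * (P₁ * n₁ + P₂ * n₂)) := by
    have h1 : 0 ≤ 1 - ρ ^ 2 := by nlinarith
    have h2 : 0 ≤ P₁ * n₁ + P₂ * n₂ := by positivity
    nlinarith [mul_nonneg h1 h2]
  simp only [ξ]
  exact div_le_div_of_nonneg_left hN (hDpos φd) hDle
end

section
/- In the two-user SIMO MAC with uncorrelated sources (ρ = 0), the sum-MSE ξ(P₁,P₂) = σ²(2σ² + P₁‖h₁‖² + P₂‖h₂‖²)/(σ⁴ + σ²(P₁‖h₁‖² + P₂‖h₂‖²) + P₁P₂(‖h₁‖²‖h₂‖² - |h₁^H h₂|²)) is strictly decreasing in P₁ (for P₁ > 0), assuming h₁ ≠ 0 and σ² > 0; hence under constraints P₁ ≤ T₁, P₂ ≤ T₂ the minimum is attained at P₁ = T₁, P₂ = T₂. -/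
theorem simo_mono_aux (σ2 n c k x x' : ℝ) (hσ : 0 < σ2) (hn : 0 < n) (hc : 0 < c)
    (hk : 0 ≤ k) (hx : 0 < x) (hxx : x < x') :
    σ2 * (2 * σ2 + x' * n + c) / (σ2 ^ 2 + σ2 * (x' * n + c) + x' * k) <
      σ2 * (2 * σ2 + x * n + c) / (σ2 ^ 2 + σ2 * (x * n + c) + x * k) := by
  have hx' : 0 < x' := hx.trans hxx
  have hQ : 0 < σ2 ^ 2 + σ2 * (x * n + c) + x * k := by
    nlinarith [mul_nonneg hx.le hk, mul_pos hx hn, mul_pos hσ hc, sq_nonneg σ2,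
      mul_pos hσ (mul_pos hx hn)]
  have hQ' : 0 < σ2 ^ 2 + σ2 * (x' * n + c) + x' * k := by
    nlinarith [mul_nonneg hx'.le hk, mul_pos hσ hc, mul_pos hσ (mul_pos hx' hn)]
  rw [div_lt_div_iff₀ hQ' hQ]
  have key : 0 < (x' - x) * (σ2 * (σ2 ^ 2 * n + 2 * σ2 * k + c * k)) := by
    apply mul_pos (by linarith)
    nlinarith [mul_nonneg hσ.le hk, mul_nonneg hc.le hk, mul_pos (mul_pos hσ hσ) hn]
  nlinarith [key]

theorem simo_key1 (σ2 n₁ n₂ D x x' y : ℝ) (hσ : 0 < σ2) (h1 : 0 < n₁) (h2 : 0 < n₂)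
    (hD : 0 ≤ D) (hx : 0 < x) (hxx : x < x') (hy : 0 < y) :
    σ2 * (2 * σ2 + x' * n₁ + y * n₂) /
        (σ2 ^ 2 + σ2 * (x' * n₁ + y * n₂) + x' * y * D) <
      σ2 * (2 * σ2 + x * n₁ + y * n₂) /
        (σ2 ^ 2 + σ2 * (x * n₁ + y * n₂) + x * y * D) := by
  have h := simo_mono_aux σ2 n₁ (y * n₂) (y * D) x x' hσ h1 (mul_pos hy h2)
    (mul_nonneg hy.le hD) hx hxx
  have e1 : σ2 ^ 2 + σ2 * (x' * n₁ + y * n₂) + x' * y * D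
      = σ2 ^ 2 + σ2 * (x' * n₁ + y * n₂) + x' * (y * D) := by ring
  have e2 : σ2 ^ 2 + σ2 * (x * n₁ + y * n₂) + x * y * D
      = σ2 ^ 2 + σ2 * (x * n₁ + y * n₂) + x * (y * D) := by ring
  rw [e1, e2]; exact h

theorem simo_key2 (σ2 n₁ n₂ D x y y' : ℝ) (hσ : 0 < σ2) (h1 : 0 < n₁) (h2 : 0 < n₂)
    (hD : 0 ≤ D) (hx : 0 < x) (hy : 0 < y) (hyy : y < y') :
    σ2 * (2 * σ2 + x * n₁ + y' * n₂) /
        (σ2 ^ 2 + σ2 * (x * n₁ + y' * n₂) + x * y' * D) <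
      σ2 * (2 * σ2 + x * n₁ + y * n₂) /
        (σ2 ^ 2 + σ2 * (x * n₁ + y * n₂) + x * y * D) := by
  have h := simo_mono_aux σ2 n₂ (x * n₁) (x * D) y y' hσ h2 (mul_pos hx h1)
    (mul_nonneg hx.le hD) hy hyy
  have e1 : σ2 * (2 * σ2 + x * n₁ + y' * n₂) = σ2 * (2 * σ2 + y' * n₂ + x * n₁) := by ring
  have e2 : σ2 ^ 2 + σ2 * (x * n₁ + y' * n₂) + x * y' * D
      = σ2 ^ 2 + σ2 * (y' * n₂ + x * n₁) + y' * (x * D) := by ring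
  have e3 : σ2 * (2 * σ2 + x * n₁ + y * n₂) = σ2 * (2 * σ2 + y * n₂ + x * n₁) := by ring
  have e4 : σ2 ^ 2 + σ2 * (x * n₁ + y * n₂) + x * y * D
      = σ2 ^ 2 + σ2 * (y * n₂ + x * n₁) + y * (x * D) := by ring
  rw [e1, e2, e3, e4]; exact h

theorem stmt_4 {NR : ℕ} (h₁ h₂ : Fin NR → ℂ) (σ2 T₁ T₂ : ℝ)
    (hσ : 0 < σ2) (hh₁ : h₁ ≠ 0) (hh₂ : h₂ ≠ 0) (hT₁ : 0 < T₁) (hT₂ : 0 < T₂) :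
    let n₁ : ℝ := ∑ i, Complex.normSq (h₁ i)
    let n₂ : ℝ := ∑ i, Complex.normSq (h₂ i)
    let ip : ℂ := ∑ i, (starRingEnd ℂ) (h₁ i) * h₂ i
    let ξ : ℝ → ℝ → ℝ := fun P₁ P₂ =>
      σ2 * (2 * σ2 + P₁ * n₁ + P₂ * n₂) /
        (σ2 ^ 2 + σ2 * (P₁ * n₁ + P₂ * n₂) +
          P₁ * P₂ * (n₁ * n₂ - ‖ip‖ ^ 2))
    (∀ P₂ > 0, ∀ P₁ P₁' : ℝ, 0 < P₁ → P₁ < P₁' → ξ P₁' P₂ < ξ P₁ P₂) ∧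
      (∀ P₁ P₂ : ℝ, 0 < P₁ → P₁ ≤ T₁ → 0 < P₂ → P₂ ≤ T₂ → ξ T₁ T₂ ≤ ξ P₁ P₂) := by
  intro n₁ n₂ ip ξ
  -- positivity of channel norms
  have hn₁ : 0 < n₁ := by
    obtain ⟨i, hi⟩ := Function.ne_iff.mp hh₁
    exact Finset.sum_pos' (fun j _ => Complex.normSq_nonneg _)
      ⟨i, Finset.mem_univ i, Complex.normSq_pos.mpr hi⟩
  have hn₂ : 0 < n₂ := by
    obtain ⟨i, hi⟩ := Function.ne_iff.mp hh₂
    exact Finset.sum_pos' (fun j _ => Complex.normSq_nonneg _)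
      ⟨i, Finset.mem_univ i, Complex.normSq_pos.mpr hi⟩
  -- Cauchy–Schwarz
  have hD : 0 ≤ n₁ * n₂ - ‖ip‖ ^ 2 := by
    have cs : ‖ip‖ ^ 2 ≤ n₁ * n₂ := by
      let v : EuclideanSpace ℂ (Fin NR) := WithLp.toLp 2 h₁
      let w : EuclideanSpace ℂ (Fin NR) := WithLp.toLp 2 h₂
      have hip : ip = inner ℂ v w := by
        simp [ip, PiLp.inner_apply, v, w, mul_comm]
      have hv : n₁ = ‖v‖ ^ 2 := by
        rw [EuclideanSpace.norm_eq, Real.sq_sqrt (by positivity)]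
        exact Finset.sum_congr rfl fun i _ => Complex.normSq_eq_norm_sq _
      have hw : n₂ = ‖w‖ ^ 2 := by
        rw [EuclideanSpace.norm_eq, Real.sq_sqrt (by positivity)]
        exact Finset.sum_congr rfl fun i _ => Complex.normSq_eq_norm_sq _
      have h := norm_inner_le_norm (𝕜 := ℂ) v w
      rw [hip, hv, hw]
      calc ‖(inner ℂ v w : ℂ)‖ ^ 2 = ‖(inner ℂ v w : ℂ)‖ ^ 2 := rfl
        _ ≤ (‖v‖ * ‖w‖) ^ 2 := by nlinarith [norm_nonneg (inner ℂ v w : ℂ)]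
        _ = ‖v‖ ^ 2 * ‖w‖ ^ 2 := by ring
    linarith
  have hξ : ∀ x y : ℝ, ξ x y =
      σ2 * (2 * σ2 + x * n₁ + y * n₂) /
        (σ2 ^ 2 + σ2 * (x * n₁ + y * n₂) + x * y * (n₁ * n₂ - ‖ip‖ ^ 2)) :=
    fun _ _ => rfl
  have mono1 : ∀ y > 0, ∀ x x' : ℝ, 0 < x → x < x' → ξ x' y < ξ x y := by
    intro y hy x x' hx hxx
    rw [hξ, hξ]
    exact simo_key1 σ2 n₁ n₂ _ x x' y hσ hn₁ hn₂ hD hx hxx hy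
  have mono2 : ∀ x > 0, ∀ y y' : ℝ, 0 < y → y < y' → ξ x y' < ξ x y := by
    intro x hx y y' hy hyy
    rw [hξ, hξ]
    exact simo_key2 σ2 n₁ n₂ _ x y y' hσ hn₁ hn₂ hD hx hy hyy
  refine ⟨mono1, ?_⟩
  intro P₁ P₂ hP₁ hP₁T hP₂ hP₂T
  have step1 : ξ T₁ T₂ ≤ ξ P₁ T₂ := by
    rcases eq_or_lt_of_le hP₁T with h | h
    · rw [h]
    · exact (mono1 T₂ hT₂ P₁ T₁ hP₁ h).le
  have step2 : ξ P₁ T₂ ≤ ξ P₁ P₂ := by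
    rcases eq_or_lt_of_le hP₂T with h | h
    · rw [h]
    · exact (mono2 P₁ hP₁ P₂ T₂ hP₂ h).le
  exact step1.trans step2
end

section
/- With α₁(P₁,P₂) = A + B(‖h₁‖²P₁ - ‖h₂‖²P₂)√(P₂/P₁) - 2σ⁴ρ|h₁^H h₂|√(P₂/P₁), where A < 0 and B = σ²ρ(1-ρ²)|h₁^H h₂| ≥ 0, a necessary condition for α₁(P₁,P₂) > 0 is ‖h₁‖²P₁ > ‖h₂‖²P₂. Consequently, defining α₂ by swapping (P₁,h₁) with (P₂,h₂), there exist no powers P₁, P₂ > 0 with α₁(P₁,P₂) > 0 and α₂(P₁,P₂) > 0 simultaneously. -/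
theorem stmt_7 {NR : ℕ} (h₁ h₂ : Fin NR → ℂ) (ρ σ2 : ℝ)
    (hσ : 0 < σ2) (hρ : 0 < ρ) (hρ1 : ρ < 1) :
    let n₁ : ℝ := ∑ i, Complex.normSq (h₁ i)
    let n₂ : ℝ := ∑ i, Complex.normSq (h₂ i)
    let ip : ℝ := ‖∑ i, (starRingEnd ℂ) (h₁ i) * h₂ i‖
    let B : ℝ := σ2 * ρ * (1 - ρ ^ 2) * ip
    ∀ A A' : ℝ, A < 0 → A' < 0 →
      let α₁ : ℝ → ℝ → ℝ := fun P₁ P₂ =>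
        A + B * (n₁ * P₁ - n₂ * P₂) * Real.sqrt (P₂ / P₁)
          - 2 * σ2 ^ 2 * ρ * ip * Real.sqrt (P₂ / P₁)
      let α₂ : ℝ → ℝ → ℝ := fun P₁ P₂ =>
        A' + B * (n₂ * P₂ - n₁ * P₁) * Real.sqrt (P₁ / P₂)
          - 2 * σ2 ^ 2 * ρ * ip * Real.sqrt (P₁ / P₂)
      (∀ P₁ P₂ : ℝ, 0 < P₁ → 0 < P₂ → 0 < α₁ P₁ P₂ → n₂ * P₂ < n₁ * P₁) ∧
        ¬ ∃ P₁ P₂ : ℝ, 0 < P₁ ∧ 0 < P₂ ∧ 0 < α₁ P₁ P₂ ∧ 0 < α₂ P₁ P₂ := by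
  intro n₁ n₂ ip B A A' hA hA' α₁ α₂
  have hip : 0 ≤ ip := norm_nonneg _
  have hB : 0 ≤ B := by
    apply mul_nonneg
    apply mul_nonneg (mul_nonneg hσ.le hρ.le)
    · nlinarith
    · exact hip
  have key : ∀ P₁ P₂ : ℝ, 0 < P₁ → 0 < P₂ → 0 < α₁ P₁ P₂ → n₂ * P₂ < n₁ * P₁ := by
    intro P₁ P₂ hP₁ hP₂ hpos
    by_contra hle
    push_neg at hle
    have hs : 0 ≤ Real.sqrt (P₂ / P₁) := Real.sqrt_nonneg _
    have h1 : B * (n₁ * P₁ - n₂ * P₂) * Real.sqrt (P₂ / P₁) ≤ 0 := by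
      apply mul_nonpos_of_nonpos_of_nonneg _ hs
      apply mul_nonpos_of_nonneg_of_nonpos hB
      linarith
    have h2 : 0 ≤ 2 * σ2 ^ 2 * ρ * ip * Real.sqrt (P₂ / P₁) := by
      apply mul_nonneg _ hs
      apply mul_nonneg _ hip
      positivity
    have : α₁ P₁ P₂ ≤ A := by simp only [α₁]; linarith
    linarith
  refine ⟨key, ?_⟩
  rintro ⟨P₁, P₂, hP₁, hP₂, ha1, ha2⟩
  have h12 := key P₁ P₂ hP₁ hP₂ ha1
  -- symmetric argument for α₂
  have hs : 0 ≤ Real.sqrt (P₁ / P₂) := Real.sqrt_nonneg _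
  have h1 : B * (n₂ * P₂ - n₁ * P₁) * Real.sqrt (P₁ / P₂) ≤ 0 := by
    apply mul_nonpos_of_nonpos_of_nonneg _ hs
    apply mul_nonpos_of_nonneg_of_nonpos hB
    linarith
  have h2 : 0 ≤ 2 * σ2 ^ 2 * ρ * ip * Real.sqrt (P₁ / P₂) := by
    apply mul_nonneg _ hs
    apply mul_nonneg _ hip
    positivity
  have : α₂ P₁ P₂ ≤ A' := by simp only [α₂]; linarith
  linarith
end

section
/- For block-diagonal Hermitian matrices A = blockdiag(Ā, 0), B = blockdiag(B̄, σ²) with σ² > 0, and D_k = blockdiag(e_k e_k^T, -T_k), if Z° = [[Z̄, v],[v^H, w]] is PSD, satisfies tr(B Z°) = 1, tr(D_k Z°) ≤ 0 for all k, maximizes tr(A Z°), and Z̄ = u u^H has rank one, then Z⁺ = [[u u^H, u√w],[√w u^H, w]] is PSD, satisfies the same constraints with the same objective value tr(A Z⁺) = tr(A Z°), and is hence also optimal. -/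
open Matrix ComplexOrder

lemma outer_posSemidef {m : Type*} [Fintype m] (x : m → ℂ) :
    (Matrix.vecMulVec x (star x)).PosSemidef := by
  refine Matrix.PosSemidef.of_dotProduct_mulVec_nonneg ?_ ?_
  · ext i j
    simp [vecMulVec_apply, conjTranspose_apply, mul_comm]
  · intro y
    have h : star y ⬝ᵥ (Matrix.vecMulVec x (star x)) *ᵥ y
        = star (star x ⬝ᵥ y) * (star x ⬝ᵥ y) := by
      simp only [dotProduct, mulVec, vecMulVec_apply, star_sum, star_mul', Pi.star_apply,
        star_star, Finset.mul_sum, Finset.sum_mul]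
      rw [Finset.sum_comm]
      congr 1; ext i; congr 1; ext j; ring
    rw [h]
    exact star_mul_self_nonneg _

lemma trace_fromBlocks' {m l : Type*} [Fintype m] [Fintype l] (A : Matrix m m ℂ)
    (B : Matrix m l ℂ) (C : Matrix l m ℂ) (D : Matrix l l ℂ) :
    (Matrix.fromBlocks A B C D).trace = A.trace + D.trace := by
  simp [Matrix.trace, Fintype.sum_sum_type, fromBlocks]

theorem stmt_8 {n K : ℕ} (Abar Bbar : Matrix (Fin n) (Fin n) ℂ)
    (σ2 : ℝ) (hσ : 0 < σ2) (T : Fin K → ℝ) (hT : ∀ k, 0 < T k)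
    (e : Fin K → Fin n)
    (A B : Matrix (Fin n ⊕ Fin 1) (Fin n ⊕ Fin 1) ℂ)
    (D : Fin K → Matrix (Fin n ⊕ Fin 1) (Fin n ⊕ Fin 1) ℂ)
    (hA : A = Matrix.fromBlocks Abar 0 0 0)
    (hB : B = Matrix.fromBlocks Bbar 0 0 ((σ2 : ℂ) • 1))
    (hD : ∀ k, D k = Matrix.fromBlocks (Matrix.single (e k) (e k) 1) 0 0
      ((-(T k) : ℂ) • 1))
    (Zbar : Matrix (Fin n) (Fin n) ℂ) (v : Fin n → ℂ) (w : ℝ) (u : Fin n → ℂ)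
    (hZbar : Zbar = Matrix.vecMulVec u (star u))
    (Zo : Matrix (Fin n ⊕ Fin 1) (Fin n ⊕ Fin 1) ℂ)
    (hZo : Zo = Matrix.fromBlocks Zbar (Matrix.of fun i (_ : Fin 1) => v i)
      (Matrix.of fun (_ : Fin 1) j => star (v j)) ((w : ℂ) • 1))
    (hPSD : Zo.PosSemidef)
    (hBtr : (B * Zo).trace = 1)
    (hDtr : ∀ k, ((D k * Zo).trace).re ≤ 0)
    (hopt : ∀ Z' : Matrix (Fin n ⊕ Fin 1) (Fin n ⊕ Fin 1) ℂ,
      Z'.PosSemidef → (B * Z').trace = 1 → (∀ k, ((D k * Z').trace).re ≤ 0) →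
      ((A * Z').trace).re ≤ ((A * Zo).trace).re) :
    let Zp : Matrix (Fin n ⊕ Fin 1) (Fin n ⊕ Fin 1) ℂ :=
      Matrix.fromBlocks (Matrix.vecMulVec u (star u))
        (Matrix.of fun i (_ : Fin 1) => (Real.sqrt w : ℂ) * u i)
        (Matrix.of fun (_ : Fin 1) j => (Real.sqrt w : ℂ) * star (u j)) ((w : ℂ) • 1)
    Zp.PosSemidef ∧ (B * Zp).trace = 1 ∧ (∀ k, ((D k * Zp).trace).re ≤ 0) ∧
      (A * Zp).trace = (A * Zo).trace ∧
      (∀ Z' : Matrix (Fin n ⊕ Fin 1) (Fin n ⊕ Fin 1) ℂ,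
        Z'.PosSemidef → (B * Z').trace = 1 → (∀ k, ((D k * Z').trace).re ≤ 0) →
        ((A * Z').trace).re ≤ ((A * Zp).trace).re) := by
  intro Zp
  -- w is nonnegative
  have hw : 0 ≤ w := by
    have h0 := hPSD.re_dotProduct_nonneg (Pi.single (Sum.inr 0) 1)
    have hentry : Zo (Sum.inr 0) (Sum.inr 0) = (w : ℂ) := by
      simp [hZo, fromBlocks_apply₂₂]
    simpa [dotProduct, mulVec, Pi.single_apply, hentry] using h0
  -- Zp is an outer product
  have hZp_eq : Zp = Matrix.vecMulVec (Sum.elim u (fun _ => ((Real.sqrt w : ℝ) : ℂ)))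
      (star (Sum.elim u (fun _ => ((Real.sqrt w : ℝ) : ℂ)))) := by
    ext i j
    rcases i with i | i <;> rcases j with j | j <;>
      simp [Zp, vecMulVec_apply, mul_comm, Pi.star_apply]
    · have h1 : (1 : Matrix (Fin 1) (Fin 1) ℂ) i j = 1 := by
        fin_cases i; fin_cases j; simp
      rw [h1, mul_one, ← Complex.ofReal_mul, Real.mul_self_sqrt hw]
  have hPSDp : Zp.PosSemidef := by
    rw [hZp_eq]; exact outer_posSemidef _
  -- key trace equality for block-diagonal matrices
  have key : ∀ (M1 : Matrix (Fin n) (Fin n) ℂ) (M4 : Matrix (Fin 1) (Fin 1) ℂ),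
      (Matrix.fromBlocks M1 0 0 M4 * Zp).trace = (Matrix.fromBlocks M1 0 0 M4 * Zo).trace := by
    intro M1 M4
    rw [hZo, hZbar]
    simp [Zp, fromBlocks_multiply, trace_fromBlocks']
  have hBeq : (B * Zp).trace = (B * Zo).trace := by rw [hB]; exact key _ _
  have hDeq : ∀ k, ((D k) * Zp).trace = ((D k) * Zo).trace := by
    intro k; rw [hD k]; exact key _ _
  have hAeq : (A * Zp).trace = (A * Zo).trace := by rw [hA]; exact key _ _
  refine ⟨hPSDp, by rw [hBeq]; exact hBtr, fun k => by rw [hDeq k]; exact hDtr k, hAeq, ?_⟩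
  intro Z' h1 h2 h3
  rw [hAeq]
  exact hopt Z' h1 h2 h3
end
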